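/- In the recombining two-period binomial model with P(ω₂)/P(ω₃) ≠ q̃ (so det A ≠ 0), the vector φ = A⁻¹(1,1,1)ᵀ is a statistical arbitrage strategy, and it equals (1/D)(ξ¹, ξ², ξ³) where ξ¹ = (qΔS₂(ω₂) − ΔS₂(ω₁))ΔS₂(ω₄) + ΔS₂(ω₁)ΔS₂(ω₃), ξ² = −(ΔS₁(ω₃) + qΔS₁(ω₂) − ΔS₁(ω₁))ΔS₂(ω₄) − (ΔS₁(ω₁) − ΔS₁(ω₄))ΔS₂(ω₃), ξ³ = −q(ΔS₁(ω₄) − ΔS₁(ω₁))ΔS₂(ω₂) − (−ΔS₁(ω₄) + ΔS₁(ω₃) + qΔS₁(ω₂))ΔS₂(ω₁), and D = (qΔS₁(ω₁)ΔS₂(ω₂) + (−ΔS₁(ω₃) − qΔS₁(ω₂))ΔS₂(ω₁))ΔS₂(ω₄) + ΔS₁(ω₄)ΔS₂(ω₁)ΔS₂(ω₃), with q = P(ω₂)/P(ω₃). -/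

import Mathlib

/-- Explicit statistical arbitrage strategy in the recombining two-period binomial model:
when `P(ω₂)/P(ω₃) ≠ q̃`, the vector `φ = (1/D)(ξ¹,ξ²,ξ³)` satisfies `Aφ = (1,1,1)ᵀ` and is
therefore a statistical arbitrage. -/
theorem statistical_arbitrage_stmt7
    (s0 sp sm spp spm smm p2 p3 : ℝ)
    (h1 : s0 < sp) (h2 : sm < s0) (h3 : sp < spp) (h4 : sm < spm) (h5 : spm < sp)
    (h6 : smm < sm) (h0 : 0 < s0) (hp2 : 0 < p2) (hp3 : 0 < p3)
    (hq : p2 / p3 ≠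
      ((spp - sp) * ((sm - s0) * (smm - sm) - (sm - s0) * (spm - sm))) /
        ((smm - sm) * ((sp - s0) * (spm - sp) - (sp - s0) * (spp - sp)))) :
    let q : ℝ := p2 / p3
    let A : Matrix (Fin 3) (Fin 3) ℝ :=
      !![sp - s0, spp - sp, 0;
         sm - s0, 0, smm - sm;
         q * (sp - s0) + (sm - s0), q * (spm - sp), spm - sm]
    let ξ1 : ℝ := (q * (spm - sp) - (spp - sp)) * (smm - sm) + (spp - sp) * (spm - sm)
    let ξ2 : ℝ := -((sm - s0) + q * (sp - s0) - (sp - s0)) * (smm - sm)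
      - ((sp - s0) - (sm - s0)) * (spm - sm)
    let ξ3 : ℝ := -(q * ((sm - s0) - (sp - s0))) * (spm - sp)
      - (-(sm - s0) + (sm - s0) + q * (sp - s0)) * (spp - sp)
    let D : ℝ := (q * (sp - s0) * (spm - sp) + (-(sm - s0) - q * (sp - s0)) * (spp - sp))
      * (smm - sm) + (sm - s0) * (spp - sp) * (spm - sm)
    let φ : Fin 3 → ℝ := ![ξ1 / D, ξ2 / D, ξ3 / D]
    A.det ≠ 0 ∧ D ≠ 0 ∧ A.mulVec φ = (fun _ => 1) ∧
      (∀ i, 0 ≤ A.mulVec φ i) ∧ A.mulVec φ ≠ 0 := by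
  intro q A ξ1 ξ2 ξ3 D φ
  have ha : (0:ℝ) < sp - s0 := by linarith
  have hd : smm - sm < 0 := by linarith
  have heb : (spm - sp) - (spp - sp) < 0 := by linarith
  have hden : (smm - sm) * ((sp - s0) * (spm - sp) - (sp - s0) * (spp - sp)) ≠ 0 := by
    have : (0:ℝ) < (smm - sm) * ((sp - s0) * (spm - sp) - (sp - s0) * (spp - sp)) := by
      have : (sp - s0) * (spm - sp) - (sp - s0) * (spp - sp) < 0 := by nlinarith
      nlinarith
    linarith
  have hD : D ≠ 0 := by
    intro hD0
    apply hq
    rw [div_eq_div_iff hp3.ne' hden]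
    have : D = 0 := hD0
    simp only [D, q] at this
    field_simp at this
    nlinarith [this]
  have hmul : A.mulVec φ = (fun _ => 1) := by
    funext i
    fin_cases i <;>
    · simp only [A, φ, Matrix.mulVec, dotProduct, Fin.sum_univ_three, Fin.zero_eta, Fin.mk_one, Fin.reduceFinMk, Fin.isValue, Matrix.vecHead,
        Matrix.cons_val', Matrix.cons_val_zero, Matrix.cons_val_one, Matrix.head_cons,
        Matrix.cons_val_two, Matrix.tail_cons, Matrix.empty_val', Matrix.cons_val_fin_one,
        Matrix.of_apply, ξ1, ξ2, ξ3]
      field_simp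
      ring
  refine ⟨?_, hD, hmul, ?_, ?_⟩
  · have hdet : A.det = -D := by
      simp only [A, D, Matrix.det_fin_three, Matrix.cons_val', Matrix.cons_val_zero,
        Matrix.cons_val_one, Matrix.head_cons, Matrix.head_fin_const, Matrix.cons_val_fin_one,
        Matrix.empty_val', Matrix.cons_val_two, Matrix.tail_cons, Matrix.of_apply]
      ring
    rw [hdet]
    simpa using hD
  · intro i
    rw [hmul]
    norm_num
  · rw [hmul]
    intro h
    have := congrFun h 0
    simp at this
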